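/- For every integer n ≥ 2, the number of Schröder paths of length n that are connected, whose first two steps are n, d, and which have no outer corners equals the number of plane rooted trees with n vertices, i.e., the Catalan number C_{n−1} = binomial(2n−2, n−1)/n. -/
import Mathlib



/-- An LLT graph: a directed graph with three kinds of edges. -/
structure LLTGraph (V : Type) where
  E1 : Finset (V × V)
  E2 : Finset (V × V)
  Ed : Finset (V × V)

/-- The variable `q`, viewed inside `ℤ[q][x₁,…,x_N]`. -/
noncomputable def lltQ (N : ℕ) : MvPolynomial (Fin N) (Polynomial ℤ) :=
  MvPolynomial.C Polynomial.X

/-- The LLT generating function of an LLT graph, read as a polynomial identity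
in `ℤ[q][x₁,…,x_N]`, colorings taking values in `{1,…,N}` (as `Fin N`). -/
noncomputable def LLT {V : Type} [Fintype V] [DecidableEq V] (G : LLTGraph V) (N : ℕ) :
    MvPolynomial (Fin N) (Polynomial ℤ) :=
  ∑ f : V → Fin N,
    ((∏ e ∈ G.E1, if f e.2 < f e.1 then 1 else 0) *
      (∏ e ∈ G.E2, if f e.2 ≤ f e.1 then 1 else 0) *
      (∏ e ∈ G.Ed,
        ((if f e.2 < f e.1 then lltQ N else 0) + (if f e.1 ≤ f e.2 then 1 else 0)))) *
    ∏ v : V, MvPolynomial.X (f v)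

/-- `K_n^⇒` : the complete LLT graph on `{1,…,n}` whose only edges are
double edges `i ⇒ j` for `i < j`. -/
def KnGraph (n : ℕ) : LLTGraph (Fin n) where
  E1 := ∅
  E2 := ∅
  Ed := Finset.univ.filter fun p => p.1 < p.2
/-- Steps of a Schröder path: north `(0,1)`, east `(1,0)`, diagonal `(1,1)`. -/
inductive SStep : Type
  | north : SStep
  | east  : SStep
  | diag  : SStep
deriving DecidableEq

/-- The displacement vector of a step. -/
def SStep.vec : SStep → ℕ × ℕ
  | .north => (0, 1)
  | .east  => (1, 0)
  | .diag  => (1, 1)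

/-- Endpoint of a path started at the origin `(0,0)`. -/
def endPt (P : List SStep) : ℕ × ℕ :=
  P.foldl (fun p s => (p.1 + s.vec.1, p.2 + s.vec.2)) (0, 0)

/-- The lattice point reached after the first `k` steps. -/
def posAt (P : List SStep) (k : ℕ) : ℕ × ℕ := endPt (P.take k)

/-- A Schröder path of length `n`: from `(0,0)` to `(n,n)`, never strictly below
the main diagonal, with no diagonal step starting on the main diagonal. -/
def IsSchroder (n : ℕ) (P : List SStep) : Prop :=
  endPt P = (n, n) ∧
  (∀ k, (posAt P k).1 ≤ (posAt P k).2) ∧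
  (∀ k, P[k]? = some SStep.diag → (posAt P k).1 < (posAt P k).2)

/-- The box `(i,j)` (unit square with corners `(i-1,j-1)` and `(i,j)`, `i,j ≥ 1`)
contains a diagonal step of `P`. -/
def hasDiagStep (P : List SStep) (i j : ℕ) : Prop :=
  ∃ k, P[k]? = some SStep.diag ∧ posAt P k = (i - 1, j - 1)

/-- The box `(i,j)` lies (weakly) below the path `P`. -/
def boxBelow (P : List SStep) (i j : ℕ) : Prop :=
  ∃ k, (posAt P k).1 ≤ i - 1 ∧ j ≤ (posAt P k).2

open Classical in
/-- The LLT graph `G_P` of a Schröder path `P` of length `n`; vertex `v : Fin n`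
represents the label `v+1`. -/
noncomputable def pathGraph (n : ℕ) (P : List SStep) : LLTGraph (Fin n) where
  E1 := Finset.univ.filter fun p => hasDiagStep P ((p.1 : ℕ) + 1) ((p.2 : ℕ) + 1)
  E2 := ∅
  Ed := Finset.univ.filter fun p =>
    (p.1 : ℕ) < (p.2 : ℕ) ∧ boxBelow P ((p.1 : ℕ) + 1) ((p.2 : ℕ) + 1) ∧
      ¬ hasDiagStep P ((p.1 : ℕ) + 1) ((p.2 : ℕ) + 1)

/-- The height `h(i)` of column `i` of `P`: the `y` such that `(i-1,y)` lies on `P`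
and is followed by an east or diagonal step. -/
noncomputable def colHeight (P : List SStep) (i : ℕ) : ℕ :=
  sSup {y | ∃ k, posAt P k = (i - 1, y) ∧
    (P[k]? = some SStep.east ∨ P[k]? = some SStep.diag)}

/-- The jump `j(i) = h(i+1) - h(i)` of column `i`. -/
noncomputable def jump (P : List SStep) (i : ℕ) : ℕ :=
  colHeight P (i + 1) - colHeight P i

open Classical in
/-- The set of columns `1 ≤ i ≤ n` of `P` containing a diagonal step. -/
noncomputable def diagCols (n : ℕ) (P : List SStep) : Finset ℕ :=
  (Finset.Icc 1 n).filter fun i =>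
    ∃ k, P[k]? = some SStep.diag ∧ (posAt P k).1 = i - 1

/-- `P` is connected: the only points of `P` on the main diagonal are `(0,0)` and `(n,n)`. -/
def ConnectedPath (n : ℕ) (P : List SStep) : Prop :=
  ∀ k, (posAt P k).1 = (posAt P k).2 → posAt P k = (0, 0) ∨ posAt P k = (n, n)

/-- The first two steps of `P` are north and diagonal. -/
def FirstStepsND (P : List SStep) : Prop :=
  P[0]? = some SStep.north ∧ P[1]? = some SStep.diag

/-- `P` has no outer corner: no point of `P` is followed by an east step and then
a north step. -/
def NoOuterCorner (P : List SStep) : Prop :=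
  ¬ ∃ k, P[k]? = some SStep.east ∧ P[k + 1]? = some SStep.north

/-- `P` has no outer corner lying strictly above the main diagonal. -/
def NoOuterCornerAboveDiag (P : List SStep) : Prop :=
  ¬ ∃ k, (posAt P k).1 < (posAt P k).2 ∧
    P[k]? = some SStep.east ∧ P[k + 1]? = some SStep.north

/-- Every connected component of `P` of length `≥ 2` begins with the steps north,
diagonal: from every point on the diagonal the path continues with a north step,
followed either by a diagonal step, or by an east step (a length-one component). -/
def ComponentsStartND (P : List SStep) : Prop :=
  ∀ k < P.length, (posAt P k).1 = (posAt P k).2 →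
    P[k]? = some SStep.north ∧
      (P[k + 1]? = some SStep.diag ∨ P[k + 1]? = some SStep.east)

set_option maxRecDepth 8000

namespace Aux

open DyckStep

/-- substitute each step by Dyck letters: north ↦ U, east ↦ D, diag ↦ DU. -/
def phi : List SStep → List DyckStep
  | [] => []
  | .north :: t => U :: phi t
  | .east :: t => D :: phi t
  | .diag :: t => D :: U :: phi t

/-- inverse substitution: replace every `DU` factor by diag. -/
def unsub : List DyckStep → List SStep
  | [] => []
  | U :: t => .north :: unsub t
  | [D] => [.east]
  | D :: U :: t => .diag :: unsub t
  | D :: D :: t => .east :: unsub (D :: t)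

lemma phi_unsub : ∀ L, phi (unsub L) = L := by
  intro L
  induction L using unsub.induct <;> simp [unsub, phi, *]

lemma unsub_phi : ∀ Q : List SStep,
    (∀ k, Q[k]? = some SStep.east → Q[k+1]? ≠ some SStep.north) →
    unsub (phi Q) = Q := by
  intro Q
  induction Q with
  | nil => intro _; rfl
  | cons s t ih =>
    intro h
    have ht : ∀ k, t[k]? = some SStep.east → t[k+1]? ≠ some SStep.north := by
      intro k hk
      have := h (k+1)
      simpa using this (by simpa using hk)
    cases s with
    | north => simp [phi, unsub, ih ht]
    | diag => simp [phi, unsub, ih ht]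
    | east =>
      cases t with
      | nil => rfl
      | cons s' t' =>
        cases s' with
        | north =>
          exact absurd (h 0 (by simp)) (by simp)
        | east =>
          have := ih ht
          simp only [phi, unsub] at this ⊢
          simpa using this
        | diag =>
          have := ih ht
          simp only [phi, unsub] at this ⊢
          simpa using this

lemma unsub_avoid : ∀ L k, (unsub L)[k]? = some SStep.east →
    (unsub L)[k+1]? ≠ some SStep.north := by
  intro L
  induction L using unsub.induct with
  | case1 => simp [unsub]
  | case2 t ih =>
    intro k hk
    cases k with
    | zero => simp [unsub] at hk
    | succ k =>
      intro hc
      exact ih k (by simpa [unsub] using hk) (by simpa [unsub] using hc)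
  | case3 =>
    intro k hk
    cases k with
    | zero => simp [unsub]
    | succ k => simp [unsub] at hk
  | case4 t ih =>
    intro k hk
    cases k with
    | zero => simp [unsub] at hk
    | succ k =>
      intro hc
      exact ih k (by simpa [unsub] using hk) (by simpa [unsub] using hc)
  | case5 t ih =>
    intro k hk
    cases k with
    | zero =>
      simp only [unsub]
      match t with
      | [] => simp [unsub]
      | U :: t' => simp [unsub]
      | D :: t' => simp [unsub]
    | succ k =>
      intro hc
      exact ih k (by simpa [unsub] using hk) (by simpa [unsub] using hc)

/-- step height contribution -/
def sval : SStep → ℤ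
  | .north => 1
  | .east => -1
  | .diag => 0

/-- height (y - x) of the endpoint of a list of steps -/
def hgt (Q : List SStep) : ℤ := ((endPt Q).2 : ℤ) - (endPt Q).1

lemma foldl_add (l : List SStep) : ∀ p : ℕ × ℕ,
    l.foldl (fun p s => (p.1 + s.vec.1, p.2 + s.vec.2)) p
      = (p.1 + (l.foldl (fun p s => (p.1 + s.vec.1, p.2 + s.vec.2)) (0, 0)).1,
         p.2 + (l.foldl (fun p s => (p.1 + s.vec.1, p.2 + s.vec.2)) (0, 0)).2) := by
  induction l with
  | nil => intro p; simp
  | cons a l ih =>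
    intro p
    simp only [List.foldl_cons]
    rw [ih, ih ((0 : ℕ) + a.vec.1, (0 : ℕ) + a.vec.2)]
    simp [Prod.ext_iff]
    omega

lemma endPt_cons (s : SStep) (t : List SStep) :
    endPt (s :: t) = (s.vec.1 + (endPt t).1, s.vec.2 + (endPt t).2) := by
  simp only [endPt, List.foldl_cons]
  rw [foldl_add]
  simp [Prod.ext_iff]

lemma endPt_count (Q : List SStep) :
    endPt Q = (Q.count .east + Q.count .diag, Q.count .north + Q.count .diag) := by
  induction Q with
  | nil => rfl
  | cons s t ih =>
    rw [endPt_cons, ih]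
    cases s <;> simp [SStep.vec, List.count_cons, Prod.ext_iff] <;> omega

lemma hgt_nil : hgt [] = 0 := rfl

lemma hgt_cons (s : SStep) (t : List SStep) : hgt (s :: t) = sval s + hgt t := by
  simp only [hgt, endPt_cons]
  cases s <;> simp [SStep.vec, sval] <;> push_cast <;> ring

lemma countU_phi (Q : List SStep) :
    (phi Q).count U = Q.count .north + Q.count .diag := by
  induction Q with
  | nil => rfl
  | cons s t ih => cases s <;> simp [phi, List.count_cons, ih] <;> omega

lemma countD_phi (Q : List SStep) :
    (phi Q).count D = Q.count .east + Q.count .diag := by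
  induction Q with
  | nil => rfl
  | cons s t ih => cases s <;> simp [phi, List.count_cons, ih] <;> omega

lemma key1 : ∀ (Q : List SStep) (c : ℤ),
    (∀ k, k < Q.length → 1 ≤ c + hgt (Q.take k)) → 0 ≤ c + hgt Q →
    ∀ j, (((phi Q).take j).count D : ℤ) ≤ c + ((phi Q).take j).count U := by
  intro Q
  induction Q with
  | nil =>
    intro c _ h0 j
    have h0' : (0:ℤ) ≤ c := by simpa [hgt_nil] using h0
    simp only [phi, List.take_nil, List.count_nil]
    simpa using h0'
  | cons s t ih =>
    intro c h1 h0 j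
    have hc : 1 ≤ c := by simpa [hgt_nil] using h1 0 (by simp)
    have h1' : ∀ k, k < t.length → 1 ≤ (c + sval s) + hgt (t.take k) := by
      intro k hk
      have := h1 (k+1) (by simpa using Nat.succ_lt_succ hk)
      rw [List.take_succ_cons, hgt_cons] at this
      linarith
    have h0' : 0 ≤ (c + sval s) + hgt t := by
      rw [hgt_cons] at h0; linarith
    have IH := ih (c + sval s) h1' h0'
    cases s with
    | north =>
      match j with
      | 0 => simp only [List.take_zero, List.count_nil]; push_cast; linarith
      | j+1 =>
        have := IH j
        simp [phi, List.take_succ_cons, List.count_cons, sval] at this ⊢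
        push_cast at this ⊢
        omega
    | east =>
      match j with
      | 0 => simp only [List.take_zero, List.count_nil]; push_cast; linarith
      | j+1 =>
        have := IH j
        simp [phi, List.take_succ_cons, List.count_cons, sval] at this ⊢
        push_cast at this ⊢
        omega
    | diag =>
      match j with
      | 0 => simp only [List.take_zero, List.count_nil]; push_cast; linarith
      | 1 =>
        simp [phi, List.take_succ_cons, List.count_cons]
        linarith
      | j+2 =>
        have := IH j
        simp [phi, List.take_succ_cons, List.count_cons, sval] at this ⊢
        push_cast
        omega

lemma key2 : ∀ (Q : List SStep) (c : ℤ),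
    (∀ k, Q[k]? = some SStep.east → Q[k+1]? ≠ some SStep.north) →
    (∀ j, (((phi Q).take j).count D : ℤ) ≤ c + ((phi Q).take j).count U) →
    (1 ≤ c ∨ Q.head? ≠ some SStep.north) →
    ∀ k, k < Q.length → 1 ≤ c + hgt (Q.take k) := by
  intro Q
  induction Q with
  | nil => intro c _ _ _ k hk; simp at hk
  | cons s t ih =>
    intro c havoid hd hdisj
    have ht : ∀ k, t[k]? = some SStep.east → t[k+1]? ≠ some SStep.north := by
      intro k hk
      have := havoid (k+1)
      simpa using this (by simpa using hk)
    have hc : 1 ≤ c := by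
      cases s with
      | north => exact hdisj.resolve_right (fun h => h (by simp))
      | east => have := hd 1; simpa [phi, List.count_cons] using this
      | diag => have := hd 1; simpa [phi, List.count_cons] using this
    have hd' : ∀ j, (((phi t).take j).count D : ℤ)
        ≤ (c + sval s) + ((phi t).take j).count U := by
      intro j
      cases s with
      | north =>
        have := hd (j+1)
        simp [phi, List.take_succ_cons, List.count_cons, sval] at this ⊢
        push_cast at this ⊢
        omega
      | east =>
        have := hd (j+1)
        simp [phi, List.take_succ_cons, List.count_cons, sval] at this ⊢
        push_cast at this ⊢
        omega
      | diag =>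
        have := hd (j+2)
        simp [phi, List.take_succ_cons, List.count_cons, sval] at this ⊢
        push_cast at this ⊢
        omega
    have hdisj' : 1 ≤ c + sval s ∨ t.head? ≠ some SStep.north := by
      cases s with
      | north => left; simp [sval]; linarith
      | diag => left; simpa [sval] using hc
      | east =>
        right
        intro hhead
        have h0 : (SStep.east :: t)[0]? = some SStep.east := by simp
        have := havoid 0 h0
        apply this
        cases t with
        | nil => simp at hhead
        | cons a t' => simpa using hhead
    intro k hk
    match k with
    | 0 => simpa [hgt_nil] using hc
    | k+1 =>
      have := ih (c + sval s) ht hd' hdisj' k (by simpa using Nat.lt_of_succ_lt_succ hk)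
      rw [List.take_succ_cons, hgt_cons]
      linarith

lemma endPt_sum_lt : ∀ (Q : List SStep) (k : ℕ), k < Q.length →
    (endPt (Q.take k)).1 + (endPt (Q.take k)).2 < (endPt Q).1 + (endPt Q).2 := by
  intro Q
  induction Q with
  | nil => intro k hk; simp at hk
  | cons s t ih =>
    intro k hk
    have hs : 1 ≤ s.vec.1 + s.vec.2 := by cases s <;> simp [SStep.vec]
    match k with
    | 0 =>
      simp only [List.take_zero]
      rw [endPt_cons]
      have : (endPt ([] : List SStep)) = (0, 0) := rfl
      rw [this]
      omega
    | k+1 =>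
      rw [List.take_succ_cons, endPt_cons, endPt_cons]
      have := ih k (by simpa using Nat.lt_of_succ_lt_succ hk)
      omega

/-- the forward list map: path to Dyck word -/
def F (P : List SStep) : List DyckStep := (phi P.tail).tail

/-- the backward list map: Dyck word to path -/
def G (L : List DyckStep) : List SStep := SStep.north :: unsub (D :: L)

lemma F_G (L : List DyckStep) : F (G L) = L := by
  simp [F, G, phi_unsub]

lemma dir1 (n : ℕ) (P : List SStep)
    (h : IsSchroder n P ∧ ConnectedPath n P ∧ FirstStepsND P ∧ NoOuterCorner P) :
    (F P).count U = (F P).count D ∧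
    (∀ i, ((F P).take i).count D ≤ ((F P).take i).count U) ∧
    (F P).count U = n - 1 ∧ G (F P) = P := by
  obtain ⟨hS, hC, hF, hO⟩ := h
  rcases P with _ | ⟨s0, P1⟩
  · simp [FirstStepsND] at hF
  rcases P1 with _ | ⟨s1, T⟩
  · obtain ⟨-, h1⟩ := hF; simp at h1
  obtain ⟨h0, h1⟩ := hF
  simp only [List.getElem?_cons_zero, List.getElem?_cons_succ,
    Option.some.injEq] at h0 h1
  subst h0; subst h1
  have hFP : F (SStep.north :: SStep.diag :: T) = U :: phi T := rfl
  -- endpoint count equations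
  have hx : T.count SStep.east + T.count SStep.diag + 1 = n := by
    have := congrArg Prod.fst hS.1
    rw [endPt_count] at this
    simp [List.count_cons] at this
    omega
  have hy : T.count SStep.north + T.count SStep.diag + 2 = n := by
    have := congrArg Prod.snd hS.1
    rw [endPt_count] at this
    simp [List.count_cons] at this
    omega
  -- avoid pattern in T
  have havT : ∀ k, T[k]? = some SStep.east → T[k+1]? ≠ some SStep.north := by
    intro k hk hk2
    exact hO ⟨k + 2, by simpa using hk, by simpa using hk2⟩
  -- interior heights
  have hyp1 : ∀ k, k < T.length → (1 : ℤ) ≤ 1 + hgt (T.take k) := by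
    intro k hk
    have hpos : posAt (SStep.north :: SStep.diag :: T) (k+2)
        = (1 + (endPt (T.take k)).1, 2 + (endPt (T.take k)).2) := by
      show endPt _ = _
      rw [List.take_succ_cons, List.take_succ_cons, endPt_cons, endPt_cons]
      simp [SStep.vec, Prod.ext_iff]
      omega
    have hle := hS.2.1 (k+2)
    rw [hpos] at hle
    simp only at hle
    by_contra hlt
    simp only [hgt] at hlt
    -- so (endPt (T.take k)).1 = (endPt (T.take k)).2 + 1
    have heqc : 1 + (endPt (T.take k)).1 = 2 + (endPt (T.take k)).2 := by omega
    have := hC (k+2) (by rw [hpos]; exact heqc)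
    rw [hpos] at this
    rcases this with h' | h'
    · simp [Prod.ext_iff] at h'
    · have hsum := endPt_sum_lt (SStep.north :: SStep.diag :: T) (k+2)
        (by simp; omega)
      have hpos' : endPt ((SStep.north :: SStep.diag :: T).take (k+2))
          = (1 + (endPt (T.take k)).1, 2 + (endPt (T.take k)).2) := hpos
      rw [hpos', hS.1] at hsum
      simp [Prod.ext_iff] at h'
      omega
  have hyp0 : (0 : ℤ) ≤ 1 + hgt T := by
    simp only [hgt, endPt_count]
    push_cast
    omega
  have hkey := key1 T 1 (by intro k hk; simpa using hyp1 k hk) hyp0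
  refine ⟨?_, ?_, ?_, ?_⟩
  · rw [hFP]
    simp [List.count_cons, countU_phi, countD_phi]
    omega
  · intro i
    rw [hFP]
    match i with
    | 0 => simp
    | j+1 =>
      rw [List.take_succ_cons]
      have := hkey j
      simp [List.count_cons]
      omega
  · rw [hFP]
    simp [List.count_cons, countU_phi]
    omega
  · rw [hFP]
    show SStep.north :: unsub (D :: U :: phi T) = _
    have : unsub (D :: U :: phi T) = SStep.diag :: unsub (phi T) := rfl
    rw [this, unsub_phi T havT]

lemma dir2 (n : ℕ) (hn : 2 ≤ n) (p : DyckWord) (hq : p.semilength = n - 1) :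
    IsSchroder n (G p.toList) ∧ ConnectedPath n (G p.toList) ∧
      FirstStepsND (G p.toList) ∧ NoOuterCorner (G p.toList) := by
  have hcu : p.toList.count U = n - 1 := hq
  have hcd : p.toList.count D = n - 1 := by rw [← p.count_U_eq_count_D]; exact hcu
  have hne : p.toList ≠ [] := by
    intro h
    rw [h] at hcu
    simp at hcu
    omega
  obtain ⟨t, ht⟩ : ∃ t, p.toList = U :: t := by
    rcases hw : p.toList with _ | ⟨a, t⟩
    · exact absurd hw hne
    · have hp1 := p.count_D_le_count_U 1
      rw [hw] at hp1
      cases a with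
      | U => exact ⟨t, rfl⟩
      | D => simp at hp1
  set R : List SStep := unsub (D :: p.toList) with hR
  have hGP : G p.toList = SStep.north :: R := rfl
  have hphiR : phi R = D :: p.toList := phi_unsub _
  have hcnt1 : R.count SStep.north + R.count SStep.diag = n - 1 := by
    have := countU_phi R
    rw [hphiR] at this
    simp [List.count_cons, hcu] at this
    omega
  have hcnt2 : R.count SStep.east + R.count SStep.diag = n := by
    have := countD_phi R
    rw [hphiR] at this
    simp [List.count_cons, hcd] at this
    omega
  have hendR : endPt R = (n, n - 1) := by
    rw [endPt_count, hcnt1, hcnt2]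
  have hendP : endPt (SStep.north :: R) = (n, n) := by
    rw [endPt_cons, hendR]
    simp [SStep.vec, Prod.ext_iff]
    omega
  have havR := unsub_avoid (D :: p.toList)
  have hd : ∀ j, (((phi R).take j).count D : ℤ) ≤ 1 + ((phi R).take j).count U := by
    intro j
    rw [hphiR]
    match j with
    | 0 => simp
    | j+1 =>
      rw [List.take_succ_cons]
      have := p.count_D_le_count_U j
      simp [List.count_cons]
      omega
  have hh : ∀ k, k < R.length → (0 : ℤ) ≤ hgt (R.take k) := by
    intro k hk
    have := key2 R 1 havR hd (Or.inl le_rfl) k hk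
    linarith
  have hxy : ∀ k, k < R.length → (endPt (R.take k)).1 ≤ (endPt (R.take k)).2 := by
    intro k hk
    have := hh k hk
    simp only [hgt] at this
    omega
  have hposS : ∀ k, posAt (SStep.north :: R) (k+1)
      = ((endPt (R.take k)).1, 1 + (endPt (R.take k)).2) := by
    intro k
    show endPt _ = _
    rw [List.take_succ_cons, endPt_cons]
    simp [SStep.vec]
  have hpos0 : posAt (SStep.north :: R) 0 = (0, 0) := rfl
  rw [hGP]
  refine ⟨⟨hendP, ?_, ?_⟩, ?_, ?_, ?_⟩
  · -- weakly above diagonal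
    intro k
    match k with
    | 0 => rw [hpos0]
    | k+1 =>
      rw [hposS k]
      rcases lt_or_ge k R.length with hk | hk
      · have := hxy k hk
        simp only
        omega
      · rw [List.take_of_length_le hk, hendR]
        simp only
        omega
  · -- diag steps strictly above
    intro k hk
    match k with
    | 0 => simp at hk
    | k+1 =>
      have hklen : k < R.length := by
        by_contra hcon
        rw [List.getElem?_eq_none (by simpa using hcon)] at hk
        simp at hk
      rw [hposS k]
      have := hxy k hklen
      simp only
      omega
  · -- connected
    intro k
    match k with
    | 0 => intro _; left; rfl
    | k+1 =>
      intro heq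
      rcases lt_or_ge k R.length with hk | hk
      · rw [hposS k] at heq
        have := hxy k hk
        simp only at heq
        omega
      · right
        rw [hposS k, List.take_of_length_le hk, hendR]
        simp only
        rw [Prod.ext_iff]
        constructor
        · rfl
        · simp; omega
  · -- first steps
    constructor
    · simp
    · show (SStep.north :: R)[1]? = _
      rw [hR, ht]
      show (SStep.north :: SStep.diag :: unsub t)[1]? = some SStep.diag
      simp
  · -- no outer corner
    rintro ⟨k, h1, h2⟩
    match k with
    | 0 => simp at h1
    | k+1 =>
      exact havR k (by simpa using h1) (by simpa using h2)

noncomputable def pathDyckEquiv (n : ℕ) (hn : 2 ≤ n) :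
    {P : List SStep // IsSchroder n P ∧ ConnectedPath n P ∧
        FirstStepsND P ∧ NoOuterCorner P} ≃
      {q : DyckWord // q.semilength = n - 1} where
  toFun x := ⟨⟨F x.1, (dir1 n x.1 x.2).1, fun i => (dir1 n x.1 x.2).2.1 i⟩,
    (dir1 n x.1 x.2).2.2.1⟩
  invFun q := ⟨G q.1.toList, dir2 n hn q.1 q.2⟩
  left_inv x := Subtype.ext ((dir1 n x.1 x.2).2.2.2)
  right_inv q := Subtype.ext (DyckWord.ext (F_G q.1.toList))

end Aux

/-- For `n ≥ 2`, the number of connected Schröder paths of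
length `n` whose first two steps are north, diagonal and which have no outer
corners equals the number of plane rooted trees with `n` vertices, i.e. the
Catalan number `C_{n−1} = binomial(2n−2, n−1)/n`. -/
theorem card_schroder_eq_catalan (n : ℕ) (hn : 2 ≤ n) :
    Nat.card {P : List SStep // IsSchroder n P ∧ ConnectedPath n P ∧
        FirstStepsND P ∧ NoOuterCorner P} = catalan (n - 1) ∧
    catalan (n - 1) = (2 * n - 2).choose (n - 1) / n := by
  constructor
  · rw [Nat.card_congr (Aux.pathDyckEquiv n hn), Nat.card_eq_fintype_card,
      DyckWord.card_dyckWord_semilength_eq_catalan]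
  · rw [catalan_eq_centralBinom_div, Nat.centralBinom]
    have h1 : 2 * (n - 1) = 2 * n - 2 := by omega
    have h2 : n - 1 + 1 = n := by omega
    rw [h1, h2]
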